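/- For the base case of WDP-distance 0 via conflicting-critical-section ordering: suppose r1 <_tr r2 are releases on the same lock, e ∈ CS(r1) is a write that is the last writer in tr of a read e' ∈ CS(r2), and b is a branch with e' <_PO b and brDepsOn(b, e'). Then any predictable trace tr' of tr containing b must contain both r1 and the acquire matching r1 before e', and in particular must satisfy lastwr(e', tr') = lastwr(e', tr); hence no predictable trace can place b while reordering r1 after b or omitting r1. -/

import Mathlib

/-- Operations an event can perform. -/
inductive Op where
  | write : ℕ → Op
  | read : ℕ → Op
  | acquire : ℕ → Op
  | release : ℕ → Op
  | branch : Op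
  deriving DecidableEq

/-- An event of an execution trace: a unique identifier, a thread identifier, and an operation. -/
structure Event where
  id : ℕ
  tid : ℕ
  op : Op
  deriving DecidableEq

/-- An execution trace is a finite sequence of events. -/
abbrev Trace := List Event

/-- Trace order: `e1` occurs strictly before `e2` in `tr`. -/
def trOrder (tr : Trace) (e1 e2 : Event) : Prop :=
  ∃ i j : Fin tr.length, i < j ∧ tr.get i = e1 ∧ tr.get j = e2

/-- Program order: trace order restricted to events of the same thread. -/
def PO (tr : Trace) (e1 e2 : Event) : Prop :=
  trOrder tr e1 e2 ∧ e1.tid = e2.tid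

/-- One step of the lock-state machine: which thread holds each lock. -/
def lockStep (h : ℕ → Option ℕ) (e : Event) : ℕ → Option ℕ :=
  match e.op with
  | Op.acquire m => fun l => if l = m then some e.tid else h l
  | Op.release m => fun l => if l = m then none else h l
  | _ => h

/-- Which thread (if any) holds each lock after executing all of `tr`. -/
def heldAfter (tr : Trace) : ℕ → Option ℕ :=
  tr.foldl lockStep (fun _ => none)

/-- Well-formedness: a thread may only acquire an unheld lock and
may only release a lock that it currently holds. -/
def WellFormed (tr : Trace) : Prop :=
  ∀ p e s, tr = p ++ e :: s →
    (∀ m, e.op = Op.acquire m → heldAfter p m = none) ∧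
    (∀ m, e.op = Op.release m → heldAfter p m = some e.tid)

/-- `r` is the release ending the critical section started by acquire `a` in `tr`:
the first release of the same lock after `a`, by the same thread. -/
def MatchingRelease (tr : Trace) (a r : Event) : Prop :=
  ∃ m, a.op = Op.acquire m ∧ r.op = Op.release m ∧ r.tid = a.tid ∧ trOrder tr a r ∧
    ∀ e, e.op = Op.release m → trOrder tr a e → trOrder tr e r → False

def isRead (e : Event) : Prop := ∃ x, e.op = Op.read x
def isWrite (e : Event) : Prop := ∃ x, e.op = Op.write x
def isAccess (e : Event) (x : ℕ) : Prop := e.op = Op.write x ∨ e.op = Op.read x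

/-- Two events conflict: same variable, different threads, at least one write. -/
def Conflicts (e1 e2 : Event) : Prop :=
  ∃ x, isAccess e1 x ∧ isAccess e2 x ∧ e1.tid ≠ e2.tid ∧
    (e1.op = Op.write x ∨ e2.op = Op.write x)

/-- Happens-before: the smallest transitive relation containing program order and
ordering every release of a lock to every later acquire of the same lock. -/
inductive HB (tr : Trace) : Event → Event → Prop where
  | po : ∀ e1 e2, PO tr e1 e2 → HB tr e1 e2
  | relacq : ∀ r a m, r.op = Op.release m → a.op = Op.acquire m → trOrder tr r a →
      HB tr r a
  | trans : ∀ e1 e2 e3, HB tr e1 e2 → HB tr e2 e3 → HB tr e1 e3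

/-- `e` belongs to the critical section ended by release `r`
(including the bounding acquire and release). -/
def InCS (tr : Trace) (r e : Event) : Prop :=
  ∃ a, MatchingRelease tr a r ∧
    (e = a ∨ e = r ∨ (trOrder tr a e ∧ trOrder tr e r ∧ e.tid = a.tid))

/-- `w` is the last writer of read `r` in trace `tr`. -/
def LastWr (tr : Trace) (r w : Event) : Prop :=
  ∃ x, r.op = Op.read x ∧ w.op = Op.write x ∧ trOrder tr w r ∧
    ∀ w', w'.op = Op.write x → ¬ (trOrder tr w w' ∧ trOrder tr w' r)

/-- Causal reads with respect to observed trace `tr`, branch-dependence `dep`,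
and the set `S` of events of a candidate reordered trace: a read is causal if some
branch in `S` PO-follows it and depends on it, or (inductively) its value flows to
a same-thread later write in `S` that is the last writer of a causal read. -/
inductive CausalRead (tr : Trace) (dep : Event → Event → Prop) (S : Event → Prop) :
    Event → Prop where
  | branch : ∀ e b, isRead e → S b → b.op = Op.branch → PO tr e b → dep b e →
      CausalRead tr dep S e
  | flow : ∀ e w r, isRead e → S w → isWrite w → PO tr e w → LastWr tr r w →
      CausalRead tr dep S r → CausalRead tr dep S e

/-- `tr'` is a predictable trace of `tr`: it contains only events of `tr` and
satisfies the PO, last-writer (LW), and lock-semantics (LS) rules. -/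
structure Predictable (dep : Event → Event → Prop) (tr tr' : Trace) : Prop where
  sub : ∀ e ∈ tr', e ∈ tr
  po_rule : ∀ e1 e2, PO tr e1 e2 → trOrder tr' e1 e2 ∨ e2 ∉ tr'
  lw_rule : ∀ e, e ∈ tr' → CausalRead tr dep (fun x => x ∈ tr') e →
      ∀ w, LastWr tr' e w ↔ LastWr tr e w
  ls_rule : ∀ a1 a2 m, a1.op = Op.acquire m → a2.op = Op.acquire m →
      trOrder tr' a1 a2 →
      ∃ r, MatchingRelease tr a1 r ∧ trOrder tr' a1 r ∧ trOrder tr' r a2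

/-- Lock `m` is held at event `e` by its executing thread. -/
def HeldAt (tr : Trace) (e : Event) (m : ℕ) : Prop :=
  ∃ a r, a.op = Op.acquire m ∧ a.tid = e.tid ∧ MatchingRelease tr a r ∧
    trOrder tr a e ∧ trOrder tr e r

/-- The locksets of `e1` and `e2` are disjoint. -/
def NoCommonLock (tr : Trace) (e1 e2 : Event) : Prop :=
  ∀ m, ¬ (HeldAt tr e1 m ∧ HeldAt tr e2 m)

/-- `e1` and `e2` are consecutive in `tr` (with `e1` first). -/
def Consecutive (tr : Trace) (e1 e2 : Event) : Prop :=
  trOrder tr e1 e2 ∧ ¬ ∃ e, trOrder tr e1 e ∧ trOrder tr e e2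

/-- Weak-causally-precedes. -/
inductive WCP (tr : Trace) : Event → Event → Prop where
  | ccs : ∀ r1 r2 e1 e2 m, r1.op = Op.release m → r2.op = Op.release m →
      trOrder tr r1 r2 → InCS tr r1 e1 → InCS tr r2 e2 → Conflicts e1 e2 →
      WCP tr r1 e2
  | hb_left : ∀ e1 e2 e3, HB tr e1 e2 → WCP tr e2 e3 → WCP tr e1 e3
  | hb_right : ∀ e1 e2 e3, WCP tr e1 e2 → HB tr e2 e3 → WCP tr e1 e3
  | acqrel : ∀ a r r' m, a.op = Op.acquire m → r.op = Op.release m →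
      WCP tr a r → MatchingRelease tr a r' → WCP tr r' r
  | trans : ∀ e1 e2 e3, WCP tr e1 e2 → WCP tr e2 e3 → WCP tr e1 e3

/-- Strong-dependently-precedes. -/
inductive SDP (tr : Trace) : Event → Event → Prop where
  | ccs : ∀ r1 r2 e1 e2 m, r1.op = Op.release m → r2.op = Op.release m →
      trOrder tr r1 r2 → InCS tr r1 e1 → InCS tr r2 e2 → Conflicts e1 e2 →
      (isRead e1 ∨ isRead e2) → SDP tr r1 e2
  | wwr : ∀ r1 r2 e1 e2 e3 m x, r1.op = Op.release m → r2.op = Op.release m →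
      trOrder tr r1 r2 → InCS tr r1 e1 → InCS tr r2 e2 →
      e1.op = Op.write x → e2.op = Op.write x → e1.tid ≠ e2.tid →
      e3.op = Op.read x → PO tr e2 e3 → SDP tr r1 e3
  | hb_left : ∀ e1 e2 e3, HB tr e1 e2 → SDP tr e2 e3 → SDP tr e1 e3
  | hb_right : ∀ e1 e2 e3, SDP tr e1 e2 → HB tr e2 e3 → SDP tr e1 e3
  | acqrel : ∀ a r r' m, a.op = Op.acquire m → r.op = Op.release m →
      SDP tr a r → MatchingRelease tr a r' → SDP tr r' r
  | trans : ∀ e1 e2 e3, SDP tr e1 e2 → SDP tr e2 e3 → SDP tr e1 e3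

/-- Weak-doesn't-commute (DC). -/
inductive DC (tr : Trace) : Event → Event → Prop where
  | ccs : ∀ r1 r2 e1 e2 m, r1.op = Op.release m → r2.op = Op.release m →
      trOrder tr r1 r2 → InCS tr r1 e1 → InCS tr r2 e2 → Conflicts e1 e2 →
      DC tr r1 e2
  | po : ∀ e1 e2, PO tr e1 e2 → DC tr e1 e2
  | acqrel : ∀ a r r' m, a.op = Op.acquire m → r.op = Op.release m →
      DC tr a r → MatchingRelease tr a r' → DC tr r' r
  | trans : ∀ e1 e2 e3, DC tr e1 e2 → DC tr e2 e3 → DC tr e1 e3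

/-- Weak-dependently-precedes, parameterized by branch dependence `dep b r`. -/
inductive WDP (tr : Trace) (dep : Event → Event → Prop) : Event → Event → Prop where
  | wrbr : ∀ r1 r2 e1 e2 b m, r1.op = Op.release m → r2.op = Op.release m →
      trOrder tr r1 r2 → InCS tr r1 e1 → InCS tr r2 e2 → LastWr tr e2 e1 →
      b.op = Op.branch → PO tr e2 b → dep b e2 → WDP tr dep r1 b
  | po : ∀ e1 e2, PO tr e1 e2 → WDP tr dep e1 e2
  | acqrel : ∀ a r r' m, a.op = Op.acquire m → r.op = Op.release m →
      WDP tr dep a r → MatchingRelease tr a r' → WDP tr dep r' r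
  | trans : ∀ e1 e2 e3, WDP tr dep e1 e2 → WDP tr dep e2 e3 → WDP tr dep e1 e3

def WCPRace (tr : Trace) (e1 e2 : Event) : Prop :=
  trOrder tr e1 e2 ∧ Conflicts e1 e2 ∧ ¬ (WCP tr e1 e2 ∨ PO tr e1 e2) ∧
    NoCommonLock tr e1 e2

def SDPRace (tr : Trace) (e1 e2 : Event) : Prop :=
  trOrder tr e1 e2 ∧ Conflicts e1 e2 ∧ ¬ (SDP tr e1 e2 ∨ PO tr e1 e2) ∧
    NoCommonLock tr e1 e2

def DCRace (tr : Trace) (e1 e2 : Event) : Prop :=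
  trOrder tr e1 e2 ∧ Conflicts e1 e2 ∧ ¬ DC tr e1 e2

def WDPRace (tr : Trace) (dep : Event → Event → Prop) (e1 e2 : Event) : Prop :=
  trOrder tr e1 e2 ∧ Conflicts e1 e2 ∧ ¬ WDP tr dep e1 e2 ∧ NoCommonLock tr e1 e2

/-- `tr` has a predictable race: some predictable trace has two conflicting
events consecutive. -/
def HasPredRace (dep : Event → Event → Prop) (tr : Trace) : Prop :=
  ∃ tr' e1 e2, Predictable dep tr tr' ∧ Conflicts e1 e2 ∧ Consecutive tr' e1 e2

/-- `tr'` exhibits a deadlock with respect to `tr`: a cycle of at least two threads,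
each holding a lock at the end of `tr'` while its next event in `tr` is an acquire of
the next thread's lock. -/
def Deadlocked (tr tr' : Trace) : Prop :=
  ∃ n, 2 ≤ n ∧ ∃ t m : ℕ → ℕ,
    (∀ i j, i < n → j < n → t i = t j → i = j) ∧
    ∀ i < n,
      heldAfter tr' (m i) = some (t i) ∧
      ∃ a ∈ tr, a ∉ tr' ∧ a.tid = t i ∧ a.op = Op.acquire (m ((i + 1) % n)) ∧
        ∀ e ∈ tr, e.tid = t i → trOrder tr e a → e ∈ tr'

/-- `tr` has a predictable deadlock. -/
def HasPredDeadlock (dep : Event → Event → Prop) (tr : Trace) : Prop :=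
  ∃ tr', Predictable dep tr tr' ∧ Deadlocked tr tr'
lemma trOrder_mem_left {tr : Trace} {x y : Event} (h : trOrder tr x y) : x ∈ tr := by
  obtain ⟨i, j, _, hi, _⟩ := h
  exact hi ▸ List.get_mem tr i

lemma trOrder_mem_right {tr : Trace} {x y : Event} (h : trOrder tr x y) : y ∈ tr := by
  obtain ⟨i, j, _, _, hj⟩ := h
  exact hj ▸ List.get_mem tr j

lemma trOrder_trans {tr : Trace} (hnd : tr.Nodup) {x y z : Event}
    (h1 : trOrder tr x y) (h2 : trOrder tr y z) : trOrder tr x z := by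
  obtain ⟨i, j, hij, hx, hy⟩ := h1
  obtain ⟨j', k, hjk, hy', hz⟩ := h2
  have hjj : j = j' := (List.Nodup.get_inj_iff hnd).mp (hy.trans hy'.symm)
  exact ⟨i, k, lt_trans (hjj ▸ hij) hjk, hx, hz⟩

lemma trOrder_irrefl {tr : Trace} (hnd : tr.Nodup) {x : Event} (h : trOrder tr x x) : False := by
  obtain ⟨i, j, hij, hx, hy⟩ := h
  have := (List.Nodup.get_inj_iff hnd).mp (hx.trans hy.symm)
  omega

lemma trOrder_asymm {tr : Trace} (hnd : tr.Nodup) {x y : Event}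
    (h1 : trOrder tr x y) (h2 : trOrder tr y x) : False :=
  trOrder_irrefl hnd (trOrder_trans hnd h1 h2)

lemma trOrder_total {tr : Trace} (hnd : tr.Nodup) {x y : Event}
    (hx : x ∈ tr) (hy : y ∈ tr) (hne : x ≠ y) : trOrder tr x y ∨ trOrder tr y x := by
  obtain ⟨i, hi⟩ := List.mem_iff_get.mp hx
  obtain ⟨j, hj⟩ := List.mem_iff_get.mp hy
  rcases lt_trichotomy i j with h | h | h
  · exact Or.inl ⟨i, j, h, hi, hj⟩
  · exact absurd (hi ▸ hj ▸ congrArg tr.get h) hne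
  · exact Or.inr ⟨j, i, h, hj, hi⟩

lemma matchingRelease_unique {tr : Trace} (hnd : tr.Nodup) {a r r' : Event}
    (h1 : MatchingRelease tr a r) (h2 : MatchingRelease tr a r') : r = r' := by
  obtain ⟨m, ham, hrm, _, har, hmin⟩ := h1
  obtain ⟨m', ham', hrm', _, har', hmin'⟩ := h2
  have hm : m = m' := by rw [ham] at ham'; injection ham'
  subst hm
  by_contra hne
  rcases trOrder_total hnd (trOrder_mem_right har) (trOrder_mem_right har') hne with h | h
  · exact hmin' r hrm har h
  · exact hmin r' hrm' har' h

/-- Base case via conflicting critical sections: if a write in `CS(r1)` is the last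
writer in `tr` of a read `e'` in a later same-lock `CS(r2)`, and a branch `b`
PO-follows and depends on `e'`, then any predictable trace containing `b` contains
`r1` and the acquire matching `r1` before `e'`, and preserves `e'`'s last writer. -/
theorem stmt14 (tr : Trace) (hwf : WellFormed tr) (hnd : tr.Nodup)
    (dep : Event → Event → Prop) (r1 r2 e e' b : Event) (m : ℕ)
    (hr1 : r1.op = Op.release m) (hr2 : r2.op = Op.release m)
    (h12 : trOrder tr r1 r2)
    (he : InCS tr r1 e) (he' : InCS tr r2 e')
    (hlw : LastWr tr e' e)
    (hb : b.op = Op.branch) (hpb : PO tr e' b) (hdep : dep b e') :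
    ∀ tr', tr'.Nodup → Predictable dep tr tr' → b ∈ tr' →
      r1 ∈ tr' ∧
      (∃ a1, MatchingRelease tr a1 r1 ∧ trOrder tr' a1 e' ∧ trOrder tr' r1 e') ∧
      (∀ w, LastWr tr' e' w ↔ LastWr tr e' w) := by
  intro tr' hnd' hpred hbtr'
  obtain ⟨x, hex', hewx, htee', hmax⟩ := hlw
  have hcausal : CausalRead tr dep (fun z => z ∈ tr') e' :=
    CausalRead.branch e' b ⟨x, hex'⟩ hbtr' hb hpb hdep
  have he'tr' : e' ∈ tr' := by
    rcases hpred.po_rule e' b hpb with h | h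
    · exact trOrder_mem_left h
    · exact absurd hbtr' h
  have hlwiff := hpred.lw_rule e' he'tr' hcausal
  have hlw' : LastWr tr' e' e := (hlwiff e).mpr ⟨x, hex', hewx, htee', hmax⟩
  obtain ⟨_, _, _, hee'tr', _⟩ := hlw'
  have hetr' : e ∈ tr' := trOrder_mem_left hee'tr'
  obtain ⟨a1, hma1, hcase1⟩ := he
  obtain ⟨a2, hma2, hcase2⟩ := he'
  obtain ⟨m1, ha1op, hr1op', hr1tid, ha1r1, hmin1⟩ := id hma1
  obtain ⟨m2, ha2op, hr2op', hr2tid, ha2r2, hmin2⟩ := id hma2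
  have hm1 : m1 = m := by rw [hr1] at hr1op'; injection hr1op' with h; exact h.symm
  have hm2 : m2 = m := by rw [hr2] at hr2op'; injection hr2op' with h; exact h.symm
  subst hm1; subst hm2
  -- e is strictly inside CS(r1)
  have hcase1' : trOrder tr a1 e ∧ trOrder tr e r1 ∧ e.tid = a1.tid := by
    rcases hcase1 with h | h | h
    · rw [h, ha1op] at hewx; exact absurd hewx (by simp)
    · rw [h, hr1] at hewx; exact absurd hewx (by simp)
    · exact h
  obtain ⟨ha1e, her1, hetid⟩ := hcase1'
  have hcase2' : trOrder tr a2 e' ∧ trOrder tr e' r2 ∧ e'.tid = a2.tid := by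
    rcases hcase2 with h | h | h
    · rw [h, ha2op] at hex'; exact absurd hex' (by simp)
    · rw [h, hr2] at hex'; exact absurd hex' (by simp)
    · exact h
  obtain ⟨ha2e', he'r2, he'tid⟩ := hcase2'
  -- a1, a2 are before e, e' in tr'
  have ha1e' : trOrder tr' a1 e := by
    rcases hpred.po_rule a1 e ⟨ha1e, hetid.symm⟩ with h | h
    · exact h
    · exact absurd hetr' h
  have ha2e'tr' : trOrder tr' a2 e' := by
    rcases hpred.po_rule a2 e' ⟨ha2e', he'tid.symm⟩ with h | h
    · exact h
    · exact absurd he'tr' h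
  have ha1tr' : a1 ∈ tr' := trOrder_mem_left ha1e'
  have ha2tr' : a2 ∈ tr' := trOrder_mem_left ha2e'tr'
  have hane : a1 ≠ a2 := by
    intro h
    have : r1 = r2 := matchingRelease_unique hnd hma1 (h ▸ hma2)
    exact trOrder_irrefl hnd (this ▸ h12)
  rcases trOrder_total hnd' ha1tr' ha2tr' hane with hlt | hlt
  · obtain ⟨r, hmr, h1, h2⟩ := hpred.ls_rule a1 a2 _ ha1op ha2op hlt
    have hrr1 : r = r1 := matchingRelease_unique hnd hmr hma1
    rw [hrr1] at h1 h2
    have hr1e' : trOrder tr' r1 e' := trOrder_trans hnd' h2 ha2e'tr'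
    exact ⟨trOrder_mem_left hr1e', ⟨a1, hma1, trOrder_trans hnd' h1 hr1e', hr1e'⟩, hlwiff⟩
  · obtain ⟨r, hmr, h1, h2⟩ := hpred.ls_rule a2 a1 _ ha2op ha1op hlt
    have hrr2 : r = r2 := matchingRelease_unique hnd hmr hma2
    rw [hrr2] at h1 h2
    -- r2 <_tr' a1 <_tr' e <_tr' e', but PO forces e' <_tr' r2 : contradiction
    have hr2e' : trOrder tr' r2 e' :=
      trOrder_trans hnd' (trOrder_trans hnd' h2 ha1e') hee'tr'
    have he'r2tr' : trOrder tr' e' r2 := by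
      rcases hpred.po_rule e' r2 ⟨he'r2, by rw [he'tid, hr2tid]⟩ with h | h
      · exact h
      · exact absurd (trOrder_mem_left h2) h
    exact absurd he'r2tr' (fun hh => trOrder_asymm hnd' hh hr2e')
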